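/- Any locally compact group G with a dense monothetic subgroup is either compact or topologically isomorphic to the discrete group ℤ (Weil's Lemma). -/

import Mathlib

open Subgroup Set Pointwise

section Aux

variable {G : Type*} [Group G] [TopologicalSpace G] [IsTopologicalGroup G]

/-- Covering lemma: if every point lies in `h ^ n • V` for some `n ≥ 1`, and `closure V`
is compact, then all the sets `h ^ m • V` with `m ≤ 0` are covered by finitely many
translates `h ^ j • V`, `0 ≤ j ≤ k`. -/
lemma weil_aux (h : G) (V : Set G) (hVo : IsOpen V)
    (hKc : IsCompact (closure V))
    (hd : ∀ x : G, ∃ n : ℤ, 1 ≤ n ∧ x ∈ (h ^ n) • V) :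
    ∃ k : ℤ, ∀ m : ℤ, m ≤ 0 →
      (h ^ m) • V ⊆ ⋃ j ∈ Finset.Icc (0 : ℤ) k, (h ^ j) • V := by
  obtain ⟨t, ht⟩ := hKc.elim_finite_subcover
      (fun i : {n : ℤ // 1 ≤ n} => (h ^ (i : ℤ)) • V)
      (fun i => hVo.smul _)
      (fun x _ => by
        obtain ⟨n, hn1, hn⟩ := hd x
        exact Set.mem_iUnion.2 ⟨⟨n, hn1⟩, hn⟩)
  set k : ℤ := ((t.sup fun i => (i : ℤ).toNat : ℕ) : ℤ) with hk
  refine ⟨k, ?_⟩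
  have hik : ∀ i ∈ t, (i : ℤ) ≤ k := by
    intro i hit
    calc (i : ℤ) ≤ ((i : ℤ).toNat : ℤ) := Int.self_le_toNat _
    _ ≤ k := by rw [hk]; exact_mod_cast Finset.le_sup (f := fun i : {n : ℤ // 1 ≤ n} => (i : ℤ).toNat) hit
  have key : ∀ m : ℕ, (h ^ (-(m : ℤ))) • V ⊆ ⋃ j ∈ Finset.Icc (0 : ℤ) k, (h ^ j) • V := by
    intro m
    induction m using Nat.strong_induction_on with
    | _ m ih =>
      intro x hx
      rw [Set.mem_smul_set_iff_inv_smul_mem] at hx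
      have hv := ht (subset_closure hx)
      rw [Set.mem_iUnion₂] at hv
      obtain ⟨i, hit, hiv⟩ := hv
      rw [Set.mem_smul_set_iff_inv_smul_mem] at hiv
      -- so (h^i)⁻¹ • (h^(-m))⁻¹ • x ∈ V, i.e. x ∈ h^(i - m) • V
      have hx' : x ∈ (h ^ ((i : ℤ) - (m : ℤ))) • V := by
        rw [Set.mem_smul_set_iff_inv_smul_mem]
        have : (h ^ ((i : ℤ) - (m : ℤ)))⁻¹ • x
            = (h ^ (i : ℤ))⁻¹ • ((h ^ (-(m : ℤ)))⁻¹ • x) := by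
          simp only [smul_smul, smul_eq_mul, ← zpow_neg, ← zpow_add]
          ring_nf
          rw [zpow_add, mul_assoc]
        rw [this]
        exact hiv
      have hi1 : (1 : ℤ) ≤ (i : ℤ) := i.2
      by_cases hd0 : 0 ≤ (i : ℤ) - (m : ℤ)
      · refine Set.mem_iUnion₂.2 ⟨(i : ℤ) - (m : ℤ), ?_, hx'⟩
        refine Finset.mem_Icc.2 ⟨hd0, ?_⟩
        have := hik i hit
        omega
      · push_neg at hd0
        have hmlt : ((m : ℤ) - (i : ℤ)).toNat < m := by omega
        have hx'' : x ∈ (h ^ (-(((m : ℤ) - (i : ℤ)).toNat : ℤ))) • V := by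
          have : ((((m : ℤ) - (i : ℤ)).toNat : ℤ)) = (m : ℤ) - (i : ℤ) := by omega
          rw [this]
          have : -((m : ℤ) - (i : ℤ)) = (i : ℤ) - (m : ℤ) := by ring
          rw [this]
          exact hx'
        exact ih _ hmlt hx''
  intro m hm
  have : m = -(((-m).toNat : ℤ)) := by omega
  rw [this]
  exact key _

/-- From the hypothesis that arbitrarily large powers of `g` come close to `1`, together
with density of `⟨g⟩`, every point lies in `g ^ n • V` for some `n ≥ 1`. -/
lemma weil_dense_pow (g : G) (hg : Dense ((Subgroup.zpowers g : Subgroup G) : Set G))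
    (H : ∀ U ∈ nhds (1 : G), ∀ m : ℤ, ∃ n : ℤ, m ≤ n ∧ g ^ n ∈ U)
    (V : Set G) (hVo : IsOpen V) (hV1 : (1 : G) ∈ V) :
    ∀ x : G, ∃ n : ℤ, 1 ≤ n ∧ x ∈ (g ^ n) • V := by
  intro x
  have hWo : IsOpen (x • V⁻¹) := (hVo.inv).smul x
  have hxW : x ∈ x • V⁻¹ := by
    refine ⟨1, by simpa using hV1, by simp⟩
  obtain ⟨y, hy, hyW⟩ := hg.exists_mem_open hWo ⟨x, hxW⟩
  obtain ⟨kk, hkk⟩ := Subgroup.mem_zpowers_iff.1 hy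
  have hU0 : (g ^ kk)⁻¹ • (x • V⁻¹) ∈ nhds (1 : G) := by
    refine (hWo.smul _).mem_nhds ?_
    rw [Set.mem_smul_set_iff_inv_smul_mem]
    simpa [hkk] using hyW
  obtain ⟨n, hn, hgn⟩ := H _ hU0 (1 - kk)
  refine ⟨kk + n, by omega, ?_⟩
  have hmem : g ^ (kk + n) ∈ x • V⁻¹ := by
    rw [Set.mem_smul_set_iff_inv_smul_mem, inv_inv] at hgn
    simpa [zpow_add, smul_eq_mul] using hgn
  obtain ⟨v, hv, hxv⟩ := hmem
  rw [Set.mem_smul_set_iff_inv_smul_mem]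
  have : (g ^ (kk + n))⁻¹ • x = v⁻¹ := by
    rw [← hxv]; simp [smul_eq_mul, mul_inv_rev]
  rw [this]
  exact Set.mem_inv.1 hv

end Aux

/-- Weil's Lemma: a locally compact monothetic group is compact or topologically
isomorphic to the discrete group `ℤ`. -/
theorem weil_lemma (G : Type*) [Group G] [TopologicalSpace G] [IsTopologicalGroup G]
    [LocallyCompactSpace G] [T2Space G]
    (hmono : ∃ g : G, Dense ((Subgroup.zpowers g : Subgroup G) : Set G)) :
    CompactSpace G ∨ ∃ e : G ≃* Multiplicative ℤ, Continuous e ∧ Continuous e.symm := by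
  obtain ⟨g, hg⟩ := hmono
  by_cases hord : IsOfFinOrder g
  · -- finite order: `G` is finite, hence compact
    left
    have hfin : ((Subgroup.zpowers g : Subgroup G) : Set G).Finite := hord.finite_zpowers
    have hcl : IsClosed ((Subgroup.zpowers g : Subgroup G) : Set G) := hfin.isClosed
    have huniv : ((Subgroup.zpowers g : Subgroup G) : Set G) = Set.univ := by
      rw [← hcl.closure_eq]; exact hg.closure_eq
    have : (Set.univ : Set G).Finite := huniv ▸ hfin
    have : Finite G := Set.finite_univ_iff.1 this
    infer_instance
  by_cases hacc : ∀ U ∈ nhds (1 : G), ∃ n : ℤ, n ≠ 0 ∧ g ^ n ∈ U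
  · -- 1 is a cluster point of the nontrivial powers: `G` is compact
    left
    have hinj : Function.Injective fun n : ℤ => g ^ n :=
      injective_zpow_iff_not_isOfFinOrder.2 hord
    -- arbitrarily large powers come close to 1
    have H : ∀ U ∈ nhds (1 : G), ∀ m : ℤ, ∃ n : ℤ, m ≤ n ∧ g ^ n ∈ U := by
      intro U hU m
      set m' : ℤ := max m 1 with hm'
      have hm1 : 1 ≤ m' := le_max_right _ _
      -- finite set of small nontrivial powers
      set T : Set G := (fun j : ℤ => g ^ j) '' {j : ℤ | j ≠ 0 ∧ |j| < m'} with hT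
      have hTfin : T.Finite := by
        refine (Set.Finite.image _ ?_)
        exact (Set.finite_Icc (-m') m').subset (fun j hj => by
          simp only [Set.mem_setOf_eq] at hj
          simp only [Set.mem_Icc]
          have := abs_lt.1 hj.2
          omega)
      have h1T : (1 : G) ∉ T := by
        rintro ⟨j, hj, hj1⟩
        have : j = 0 := by
          have := hinj (a₁ := j) (a₂ := 0) (by simpa using hj1)
          simpa using this
        exact hj.1 this
      have hU1 : U ∩ Tᶜ ∈ nhds (1 : G) :=
        Filter.inter_mem hU (hTfin.isClosed.isOpen_compl.mem_nhds h1T)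
      set U2 : Set G := (U ∩ Tᶜ) ∩ (U ∩ Tᶜ)⁻¹ with hU2def
      have hU2 : U2 ∈ nhds (1 : G) := Filter.inter_mem hU1 (inv_mem_nhds_one G hU1)
      obtain ⟨n, hn0, hgn⟩ := hacc U2 hU2
      have hnotsmall : ¬ (|n| < m') := by
        intro hsmall
        exact hgn.1.2 ⟨n, ⟨hn0, hsmall⟩, rfl⟩
      have habs : m' ≤ n ∨ m' ≤ -n := le_abs.1 (not_lt.1 hnotsmall)
      rcases le_or_gt m' n with h | h
      · exact ⟨n, le_trans (le_max_left _ _) h, hgn.1.1⟩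
      · have hneg : n ≤ -m' := by omega
        refine ⟨-n, by omega, ?_⟩
        have : g ^ n ∈ (U ∩ Tᶜ)⁻¹ := hgn.2
        rw [Set.mem_inv] at this
        rw [← zpow_neg] at this
        exact this.1
    have H' : ∀ U ∈ nhds (1 : G), ∀ m : ℤ, ∃ n : ℤ, m ≤ n ∧ g⁻¹ ^ n ∈ U := by
      intro U hU m
      obtain ⟨n, hn, hgn⟩ := H U⁻¹ (inv_mem_nhds_one G hU) m
      refine ⟨n, hn, ?_⟩
      rw [inv_zpow, ← zpow_neg] at *
      rw [Set.mem_inv] at hgn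
      simpa using hgn
    -- a compact-closure open neighborhood of 1
    obtain ⟨K, hKc, hKn⟩ := exists_compact_mem_nhds (1 : G)
    set V : Set G := interior K with hV
    have hVo : IsOpen V := isOpen_interior
    have hV1 : (1 : G) ∈ V := mem_interior_iff_mem_nhds.2 hKn
    have hcVc : IsCompact (_root_.closure V) :=
      hKc.of_isClosed_subset isClosed_closure (closure_minimal interior_subset hKc.isClosed)
    have hginv : Dense ((Subgroup.zpowers g⁻¹ : Subgroup G) : Set G) := by
      rw [Subgroup.zpowers_inv]; exact hg
    have hdpos := weil_dense_pow g hg H V hVo hV1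
    have hdneg := weil_dense_pow g⁻¹ hginv H' V hVo hV1
    obtain ⟨k, hk⟩ := weil_aux g⁻¹ V hVo hcVc hdneg
    rw [← isCompact_univ_iff]
    have hcover : (Set.univ : Set G) ⊆ ⋃ j ∈ Finset.Icc (0 : ℤ) k, (g⁻¹ ^ j) • _root_.closure V := by
      intro x _
      obtain ⟨n, hn1, hn⟩ := hdpos x
      have hx : x ∈ (g⁻¹ ^ (-n)) • V := by
        rw [zpow_neg, inv_zpow, inv_inv]
        exact hn
      have := hk (-n) (by omega) hx
      rw [Set.mem_iUnion₂] at this ⊢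
      obtain ⟨j, hj, hjx⟩ := this
      exact ⟨j, hj, Set.smul_set_mono _root_.subset_closure hjx⟩
    have hcomp : IsCompact (⋃ j ∈ Finset.Icc (0 : ℤ) k, (g⁻¹ ^ j) • _root_.closure V) := by
      refine (Finset.Icc (0 : ℤ) k).isCompact_biUnion ?_
      intro j _
      exact hcVc.smul _
    exact hcomp.of_isClosed_subset isClosed_univ hcover
  · -- discrete case: `G ≃ ℤ`
    right
    push_neg at hacc
    obtain ⟨U, hU, hUn⟩ := hacc
    obtain ⟨W, hWo, hW1, hWU⟩ := exists_open_nhds_one_mul_subset hU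
    set W' : Set G := W ∩ W⁻¹ with hW'
    have hW'o : IsOpen W' := hWo.inter hWo.inv
    have hW'1 : (1 : G) ∈ W' := ⟨hW1, by simpa using hW1⟩
    have hinj : Function.Injective fun n : ℤ => g ^ n :=
      injective_zpow_iff_not_isOfFinOrder.2 hord
    -- the cyclic subgroup is closed
    have hclosed : IsClosed ((Subgroup.zpowers g : Subgroup G) : Set G) := by
      rw [← isOpen_compl_iff]
      rw [isOpen_iff_forall_mem_open]
      intro x hx
      by_cases hmeet : ((x • W') ∩ (Subgroup.zpowers g : Subgroup G)).Nonempty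
      · obtain ⟨y, hyW, hyP⟩ := hmeet
        obtain ⟨n, hn⟩ := Subgroup.mem_zpowers_iff.1 hyP
        -- any power of g in x • W' equals g ^ n
        have huniq : ∀ m : ℤ, g ^ m ∈ x • W' → m = n := by
          intro m hm
          obtain ⟨w1, hw1, hxw1⟩ := hm
          have hyW' : g ^ n ∈ x • W' := by rw [hn]; exact hyW
          obtain ⟨w2, hw2, hxw2⟩ := hyW'
          simp only [smul_eq_mul] at hxw1 hxw2
          have hprod : g ^ (-n + m) ∈ U := by
            have : g ^ (-n + m) = w2⁻¹ * w1 := by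
              rw [zpow_add, zpow_neg, ← hxw1, ← hxw2]
              group
            rw [this]
            exact hWU (Set.mul_mem_mul (Set.mem_inv.1 (by simpa using hw2.2)) hw1.1)
          by_contra hne
          exact hUn (-n + m) (by omega) hprod
        -- x would be g ^ n, contradicting hx
        exfalso
        apply hx
        have : x ∈ _root_.closure {g ^ n} := by
          rw [mem_closure_iff]
          intro O hOo hxO
          have hxm : x ∈ O ∩ x • W' := ⟨hxO, by exact ⟨1, hW'1, by simp⟩⟩
          obtain ⟨z, hz, hzP⟩ := hg.exists_mem_open (hOo.inter (hW'o.smul x)) ⟨x, hxm⟩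
          obtain ⟨m, hm⟩ := Subgroup.mem_zpowers_iff.1 hz
          have := huniq m (by rw [hm]; exact hzP.2)
          exact ⟨z, hzP.1, by rw [← hm, this]; exact Set.mem_singleton _⟩
        rw [_root_.closure_singleton, Set.mem_singleton_iff] at this
        rw [this]
        exact Subgroup.zpow_mem _ (Subgroup.mem_zpowers g) n
      · refine ⟨x • W', fun z hz hzP => hmeet ⟨z, hz, hzP⟩, hW'o.smul x, ?_⟩
        exact ⟨1, hW'1, by simp⟩
    have huniv : ((Subgroup.zpowers g : Subgroup G) : Set G) = Set.univ := by
      rw [← hclosed.closure_eq]; exact hg.closure_eq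
    -- U ⊆ {1}, hence G is discrete
    have hUsub : U ⊆ {(1 : G)} := by
      intro x hxU
      have : x ∈ ((Subgroup.zpowers g : Subgroup G) : Set G) := huniv ▸ Set.mem_univ x
      obtain ⟨n, hn⟩ := Subgroup.mem_zpowers_iff.1 this
      by_cases hn0 : n = 0
      · simp [← hn, hn0]
      · exact absurd (hn ▸ hxU) (hUn n hn0)
    have hdisc : DiscreteTopology G := by
      rw [discreteTopology_iff_isOpen_singleton_one]
      obtain ⟨t, hts, hto, hti⟩ := mem_nhds_iff.1 hU
      have : t = {(1 : G)} := Set.Subset.antisymm (hts.trans hUsub) (by simpa using hti)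
      rw [← this]; exact hto
    -- the abstract isomorphism
    have hbij : Function.Bijective (zpowersHom G g) := by
      constructor
      · intro a b hab
        have : a.toAdd = b.toAdd := hinj hab
        exact Multiplicative.toAdd.injective this
      · intro x
        have : x ∈ ((Subgroup.zpowers g : Subgroup G) : Set G) := huniv ▸ Set.mem_univ x
        obtain ⟨n, hn⟩ := Subgroup.mem_zpowers_iff.1 this
        exact ⟨Multiplicative.ofAdd n, hn⟩
    refine ⟨(MulEquiv.ofBijective (zpowersHom G g) hbij).symm, ?_, ?_⟩
    · exact continuous_of_discreteTopology
    · exact continuous_of_discreteTopology
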